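/- Fix ω₁, ω₂ ∈ ℂ∖{0} and λ ∈ ℂ; set q = exp(πiω₁/ω₂), q̃ = exp(πiω₂/ω₁), and assume q² ≠ 1 and q̃² ≠ 1. On the space of all functions φ : ℂ → ℂ define the operators of the representation π_λ: (Kφ)(t) = e^{πiλ/ω₂}·φ(t − iω₁), (Eφ)(t) = (q − q⁻¹)⁻¹·e^{−2πt/ω₂}·(φ(t) − φ(t − iω₁)), (Fφ)(t) = q(q − q⁻¹)⁻¹·e^{2πt/ω₂}·(e^{πiλ/ω₂}·φ(t) − e^{−πiλ/ω₂}·φ(t + iω₁)); and the operators of the modular dual representation π̃_λ obtained by exchanging ω₁ ↔ ω₂ (and q ↔ q̃): (K̃φ)(t) = e^{πiλ/ω₁}·φ(t − iω₂), (Ẽφ)(t) = (q̃ − q̃⁻¹)⁻¹·e^{−2πt/ω₁}·(φ(t) − φ(t − iω₂)), (F̃φ)(t) = q̃(q̃ − q̃⁻¹)⁻¹·e^{2πt/ω₁}·(e^{πiλ/ω₁}·φ(t) − e^{−πiλ/ω₁}·φ(t + iω₂)). Then every operator from {K, E, F} commutes with every operator from {K̃, Ẽ, F̃}: X ∘ Y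 = Y ∘ X for all X ∈ {K, E, F} and Y ∈ {K̃, Ẽ, F̃}. -/

import Mathlib

/-- The operator `φ(t) ↦ g(t)·φ(t + s)` on functions `ℂ → ℂ`. -/
noncomputable def shiftMulOp (g : ℂ → ℂ) (s : ℂ) : (ℂ → ℂ) →ₗ[ℂ] (ℂ → ℂ) where
  toFun φ := fun t => g t * φ (t + s)
  map_add' φ ψ := by funext t; simp [mul_add]
  map_smul' c φ := by funext t; simp [smul_eq_mul]; ring

/-- Two shift-multiplication operators commute as soon as each symbol is
periodic with respect to the other's shift. -/
lemma shiftMulOp_commute (g h : ℂ → ℂ) (s s' : ℂ)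
    (hg : ∀ t, g (t + s') = g t) (hh : ∀ t, h (t + s) = h t) :
    Commute (shiftMulOp g s) (shiftMulOp h s') := by
  refine LinearMap.ext fun φ => funext fun t => ?_
  show g t * (h (t + s) * φ (t + s + s')) = h t * (g (t + s') * φ (t + s' + s))
  rw [hh, hg, show t + s + s' = t + s' + s by ring]
  ring

/-- Periodicity of `exp (2πt/ω)` under shifts by `±iω` (or `0`). -/
lemma exp_per_pos (ω t s : ℂ) (hω : ω ≠ 0)
    (hs : s = 0 ∨ s = Complex.I * ω ∨ s = -(Complex.I * ω)) :
    Complex.exp (2 * (Real.pi : ℂ) * (t + s) / ω) =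
      Complex.exp (2 * (Real.pi : ℂ) * t / ω) := by
  rw [show 2 * (Real.pi : ℂ) * (t + s) / ω = 2 * (Real.pi : ℂ) * t / ω
      + 2 * (Real.pi : ℂ) * s / ω by ring, Complex.exp_add]
  rcases hs with hs | hs | hs <;> subst hs
  · simp
  · rw [show 2 * (Real.pi : ℂ) * (Complex.I * ω) / ω = 2 * (Real.pi : ℂ) * Complex.I by
      field_simp]
    rw [Complex.exp_two_pi_mul_I, mul_one]
  · rw [show 2 * (Real.pi : ℂ) * (-(Complex.I * ω)) / ω = -(2 * (Real.pi : ℂ) * Complex.I) by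
      field_simp]
    rw [Complex.exp_neg, Complex.exp_two_pi_mul_I, inv_one, mul_one]

/-- Periodicity of `exp (-(2πt/ω))` under shifts by `±iω` (or `0`). -/
lemma exp_per_neg (ω t s : ℂ) (hω : ω ≠ 0)
    (hs : s = 0 ∨ s = Complex.I * ω ∨ s = -(Complex.I * ω)) :
    Complex.exp (-(2 * (Real.pi : ℂ) * (t + s) / ω)) =
      Complex.exp (-(2 * (Real.pi : ℂ) * t / ω)) := by
  rw [Complex.exp_neg, Complex.exp_neg, exp_per_pos ω t s hω hs]

/-- Every operator of the principal series representation `π_λ` of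
`U_q(sl(2,ℝ))` commutes with every operator of the modular dual representation
`π̃_λ` (obtained by exchanging `ω₁ ↔ ω₂`). -/
theorem modular_double_commutes (ω₁ ω₂ lam : ℂ) (hω₁ : ω₁ ≠ 0) (hω₂ : ω₂ ≠ 0)
    (hq2 : Complex.exp ((Real.pi : ℂ) * Complex.I * ω₁ / ω₂) ^ 2 ≠ 1)
    (htq2 : Complex.exp ((Real.pi : ℂ) * Complex.I * ω₂ / ω₁) ^ 2 ≠ 1) :
    let q := Complex.exp ((Real.pi : ℂ) * Complex.I * ω₁ / ω₂)
    let tq := Complex.exp ((Real.pi : ℂ) * Complex.I * ω₂ / ω₁)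
    let K := shiftMulOp (fun _ => Complex.exp ((Real.pi : ℂ) * Complex.I * lam / ω₂))
        (-(Complex.I * ω₁))
    let E := (q - q⁻¹)⁻¹ •
        (shiftMulOp (fun t => Complex.exp (-(2 * (Real.pi : ℂ) * t / ω₂))) 0
          - shiftMulOp (fun t => Complex.exp (-(2 * (Real.pi : ℂ) * t / ω₂))) (-(Complex.I * ω₁)))
    let F := (q * (q - q⁻¹)⁻¹) •
        (Complex.exp ((Real.pi : ℂ) * Complex.I * lam / ω₂) •
            shiftMulOp (fun t => Complex.exp (2 * (Real.pi : ℂ) * t / ω₂)) 0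
          - Complex.exp (-((Real.pi : ℂ) * Complex.I * lam / ω₂)) •
            shiftMulOp (fun t => Complex.exp (2 * (Real.pi : ℂ) * t / ω₂)) (Complex.I * ω₁))
    let Kt := shiftMulOp (fun _ => Complex.exp ((Real.pi : ℂ) * Complex.I * lam / ω₁))
        (-(Complex.I * ω₂))
    let Et := (tq - tq⁻¹)⁻¹ •
        (shiftMulOp (fun t => Complex.exp (-(2 * (Real.pi : ℂ) * t / ω₁))) 0
          - shiftMulOp (fun t => Complex.exp (-(2 * (Real.pi : ℂ) * t / ω₁))) (-(Complex.I * ω₂)))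
    let Ft := (tq * (tq - tq⁻¹)⁻¹) •
        (Complex.exp ((Real.pi : ℂ) * Complex.I * lam / ω₁) •
            shiftMulOp (fun t => Complex.exp (2 * (Real.pi : ℂ) * t / ω₁)) 0
          - Complex.exp (-((Real.pi : ℂ) * Complex.I * lam / ω₁)) •
            shiftMulOp (fun t => Complex.exp (2 * (Real.pi : ℂ) * t / ω₁)) (Complex.I * ω₂))
    ∀ X ∈ ([K, E, F] : List ((ℂ → ℂ) →ₗ[ℂ] (ℂ → ℂ))),
      ∀ Y ∈ ([Kt, Et, Ft] : List ((ℂ → ℂ) →ₗ[ℂ] (ℂ → ℂ))),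
        X ∘ₗ Y = Y ∘ₗ X := by
  intro q tq K E F Kt Et Ft
  -- periodicity of symbols on the `X` side under the `Y`-side shifts
  have hXK : ∀ s' : ℂ, (s' = 0 ∨ s' = Complex.I * ω₂ ∨ s' = -(Complex.I * ω₂)) →
      ∀ t : ℂ, (fun _ : ℂ => Complex.exp ((Real.pi : ℂ) * Complex.I * lam / ω₂)) (t + s')
        = (fun _ : ℂ => Complex.exp ((Real.pi : ℂ) * Complex.I * lam / ω₂)) t :=
    fun _ _ _ => rfl
  have hXE : ∀ s' : ℂ, (s' = 0 ∨ s' = Complex.I * ω₂ ∨ s' = -(Complex.I * ω₂)) →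
      ∀ t : ℂ, (fun t : ℂ => Complex.exp (-(2 * (Real.pi : ℂ) * t / ω₂))) (t + s')
        = (fun t : ℂ => Complex.exp (-(2 * (Real.pi : ℂ) * t / ω₂))) t :=
    fun s' hs' t => exp_per_neg ω₂ t s' hω₂ hs'
  have hXF : ∀ s' : ℂ, (s' = 0 ∨ s' = Complex.I * ω₂ ∨ s' = -(Complex.I * ω₂)) →
      ∀ t : ℂ, (fun t : ℂ => Complex.exp (2 * (Real.pi : ℂ) * t / ω₂)) (t + s')
        = (fun t : ℂ => Complex.exp (2 * (Real.pi : ℂ) * t / ω₂)) t :=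
    fun s' hs' t => exp_per_pos ω₂ t s' hω₂ hs'
  have hYK : ∀ s : ℂ, (s = 0 ∨ s = Complex.I * ω₁ ∨ s = -(Complex.I * ω₁)) →
      ∀ t : ℂ, (fun _ : ℂ => Complex.exp ((Real.pi : ℂ) * Complex.I * lam / ω₁)) (t + s)
        = (fun _ : ℂ => Complex.exp ((Real.pi : ℂ) * Complex.I * lam / ω₁)) t :=
    fun _ _ _ => rfl
  have hYE : ∀ s : ℂ, (s = 0 ∨ s = Complex.I * ω₁ ∨ s = -(Complex.I * ω₁)) →
      ∀ t : ℂ, (fun t : ℂ => Complex.exp (-(2 * (Real.pi : ℂ) * t / ω₁))) (t + s)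
        = (fun t : ℂ => Complex.exp (-(2 * (Real.pi : ℂ) * t / ω₁))) t :=
    fun s hs t => exp_per_neg ω₁ t s hω₁ hs
  have hYF : ∀ s : ℂ, (s = 0 ∨ s = Complex.I * ω₁ ∨ s = -(Complex.I * ω₁)) →
      ∀ t : ℂ, (fun t : ℂ => Complex.exp (2 * (Real.pi : ℂ) * t / ω₁)) (t + s)
        = (fun t : ℂ => Complex.exp (2 * (Real.pi : ℂ) * t / ω₁)) t :=
    fun s hs t => exp_per_pos ω₁ t s hω₁ hs
  -- commutation of the individual operators
  have hKKt : Commute K Kt :=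
    shiftMulOp_commute _ _ _ _
      (hXK _ (Or.inr (Or.inr rfl))) (hYK _ (Or.inr (Or.inr rfl)))
  have hKEt : Commute K Et := by
    refine Commute.smul_right ?_ _
    exact Commute.sub_right
      (shiftMulOp_commute _ _ _ _ (hXK 0 (Or.inl rfl)) (hYE _ (Or.inr (Or.inr rfl))))
      (shiftMulOp_commute _ _ _ _
        (hXK _ (Or.inr (Or.inr rfl))) (hYE _ (Or.inr (Or.inr rfl))))
  have hKFt : Commute K Ft := by
    refine Commute.smul_right ?_ _
    exact Commute.sub_right
      (Commute.smul_right
        (shiftMulOp_commute _ _ _ _ (hXK 0 (Or.inl rfl)) (hYF _ (Or.inr (Or.inr rfl)))) _)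
      (Commute.smul_right
        (shiftMulOp_commute _ _ _ _
          (hXK _ (Or.inr (Or.inl rfl))) (hYF _ (Or.inr (Or.inr rfl)))) _)
  have hEKt : Commute E Kt := by
    refine Commute.smul_left ?_ _
    exact Commute.sub_left
      (shiftMulOp_commute _ _ _ _ (hXE _ (Or.inr (Or.inr rfl))) (hYK 0 (Or.inl rfl)))
      (shiftMulOp_commute _ _ _ _
        (hXE _ (Or.inr (Or.inr rfl))) (hYK _ (Or.inr (Or.inr rfl))))
  have hEEt : Commute E Et := by
    refine Commute.smul_left (Commute.smul_right ?_ _) _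
    exact Commute.sub_left
      (Commute.sub_right
        (shiftMulOp_commute _ _ _ _ (hXE 0 (Or.inl rfl)) (hYE 0 (Or.inl rfl)))
        (shiftMulOp_commute _ _ _ _
          (hXE _ (Or.inr (Or.inr rfl))) (hYE 0 (Or.inl rfl))))
      (Commute.sub_right
        (shiftMulOp_commute _ _ _ _ (hXE 0 (Or.inl rfl)) (hYE _ (Or.inr (Or.inr rfl))))
        (shiftMulOp_commute _ _ _ _
          (hXE _ (Or.inr (Or.inr rfl))) (hYE _ (Or.inr (Or.inr rfl)))))
  have hEFt : Commute E Ft := by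
    refine Commute.smul_left (Commute.smul_right ?_ _) _
    refine Commute.sub_left ?_ ?_ <;>
    refine Commute.sub_right (Commute.smul_right ?_ _) (Commute.smul_right ?_ _)
    · exact shiftMulOp_commute _ _ _ _ (hXE 0 (Or.inl rfl)) (hYF 0 (Or.inl rfl))
    · exact shiftMulOp_commute _ _ _ _ (hXE _ (Or.inr (Or.inl rfl))) (hYF 0 (Or.inl rfl))
    · exact shiftMulOp_commute _ _ _ _
        (hXE 0 (Or.inl rfl)) (hYF _ (Or.inr (Or.inr rfl)))
    · exact shiftMulOp_commute _ _ _ _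
        (hXE _ (Or.inr (Or.inl rfl))) (hYF _ (Or.inr (Or.inr rfl)))
  have hFKt : Commute F Kt := by
    refine Commute.smul_left ?_ _
    exact Commute.sub_left
      (Commute.smul_left
        (shiftMulOp_commute _ _ _ _ (hXF _ (Or.inr (Or.inr rfl))) (hYK 0 (Or.inl rfl))) _)
      (Commute.smul_left
        (shiftMulOp_commute _ _ _ _
          (hXF _ (Or.inr (Or.inr rfl))) (hYK _ (Or.inr (Or.inl rfl)))) _)
  have hFEt : Commute F Et := by
    refine Commute.smul_left (Commute.smul_right ?_ _) _
    refine Commute.sub_left (Commute.smul_left ?_ _) (Commute.smul_left ?_ _) <;>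
    refine Commute.sub_right ?_ ?_
    · exact shiftMulOp_commute _ _ _ _ (hXF 0 (Or.inl rfl)) (hYE 0 (Or.inl rfl))
    · exact shiftMulOp_commute _ _ _ _
        (hXF _ (Or.inr (Or.inr rfl))) (hYE 0 (Or.inl rfl))
    · exact shiftMulOp_commute _ _ _ _ (hXF 0 (Or.inl rfl)) (hYE _ (Or.inr (Or.inl rfl)))
    · exact shiftMulOp_commute _ _ _ _
        (hXF _ (Or.inr (Or.inr rfl))) (hYE _ (Or.inr (Or.inl rfl)))
  have hFFt : Commute F Ft := by
    refine Commute.smul_left (Commute.smul_right ?_ _) _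
    refine Commute.sub_left (Commute.smul_left ?_ _) (Commute.smul_left ?_ _) <;>
    refine Commute.sub_right (Commute.smul_right ?_ _) (Commute.smul_right ?_ _)
    · exact shiftMulOp_commute _ _ _ _ (hXF 0 (Or.inl rfl)) (hYF 0 (Or.inl rfl))
    · exact shiftMulOp_commute _ _ _ _ (hXF _ (Or.inr (Or.inl rfl))) (hYF 0 (Or.inl rfl))
    · exact shiftMulOp_commute _ _ _ _ (hXF 0 (Or.inl rfl)) (hYF _ (Or.inr (Or.inl rfl)))
    · exact shiftMulOp_commute _ _ _ _
        (hXF _ (Or.inr (Or.inl rfl))) (hYF _ (Or.inr (Or.inl rfl)))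
  intro X hX Y hY
  simp only [List.mem_cons, List.not_mem_nil, or_false] at hX hY
  rcases hX with rfl | rfl | rfl <;> rcases hY with rfl | rfl | rfl
  exacts [hKKt, hKEt, hKFt, hEKt, hEEt, hEFt, hFKt, hFEt, hFFt]
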